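/- Let α ∈ (0,1). A continuous function f : [0,1] → ℝ^d is α-Hölder continuous if and only if sup_{p,m} 2^{p(α − 1/2)} |⟨H_{pm}, df⟩| < ∞, and in that case sup_{p,m} 2^{p(α − 1/2)} |⟨H_{pm}, df⟩| is comparable (up to constants depending only on α) to the Hölder seminorm sup_{s<t} |f(t)−f(s)|/|t−s|^α. -/

import Mathlib

noncomputable section
open MeasureTheory Set

/-- The Haar coefficient `⟨H_{pm}, df⟩ = 2^{p/2} (2 f(t¹_{pm}) - f(t⁰_{pm}) - f(t²_{pm}))`. -/
def haarCoeff {d : ℕ} (f : ℝ → EuclideanSpace ℝ (Fin d)) (p m : ℕ) : EuclideanSpace ℝ (Fin d) :=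
  (2 : ℝ) ^ ((p : ℝ) / 2) •
    (2 • f ((2 * (m : ℝ) - 1) / 2 ^ (p + 1)) - f (((m : ℝ) - 1) / 2 ^ p) - f ((m : ℝ) / 2 ^ p))

/-- `f` is `α`-Hölder on `[0,1]` with constant `K`. -/
def HolderBound {d : ℕ} (α : ℝ) (f : ℝ → EuclideanSpace ℝ (Fin d)) (K : ℝ) : Prop :=
  ∀ s ∈ Icc (0:ℝ) 1, ∀ t ∈ Icc (0:ℝ) 1, ‖f t - f s‖ ≤ K * |t - s| ^ α

/-- `sup_{p,m} 2^{p(α-1/2)} |⟨H_{pm}, df⟩| ≤ K`, including the coefficient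
`⟨H_{00}, df⟩ = f(1) - f(0)`. -/
def HaarCoeffBound {d : ℕ} (α : ℝ) (f : ℝ → EuclideanSpace ℝ (Fin d)) (K : ℝ) : Prop :=
  ‖f 1 - f 0‖ ≤ K ∧
  ∀ p m : ℕ, 1 ≤ m → m ≤ 2 ^ p →
    (2 : ℝ) ^ ((p : ℝ) * (α - 1 / 2)) * ‖haarCoeff f p m‖ ≤ K


namespace CAux
open Filter Topology


lemma rpow2_pos (x : ℝ) : (0:ℝ) < (2:ℝ) ^ x := Real.rpow_pos_of_pos two_pos x

def c1 (α : ℝ) : ℝ := 1 + 1 / ((2:ℝ) ^ (1 - α) - 1)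
def c2 (α : ℝ) : ℝ := c1 α * (2:ℝ) ^ (-α) / (1 - (2:ℝ) ^ (-α))

variable {α : ℝ}

lemma beta_gt (hα1 : α < 1) : 1 < (2:ℝ) ^ (1 - α) := by
  rw [Real.one_lt_rpow_iff_of_pos two_pos]
  left; constructor <;> [norm_num; linarith]

lemma c1_ge_one (hα1 : α < 1) : 1 ≤ c1 α := by
  have h := beta_gt hα1
  have : 0 < (2:ℝ) ^ (1-α) - 1 := by linarith
  have : 0 ≤ 1 / ((2:ℝ) ^ (1-α) - 1) := by positivity
  unfold c1; linarith

lemma c1_key (hα1 : α < 1) : 1 + c1 α ≤ c1 α * (2:ℝ) ^ (1 - α) := by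
  have h := beta_gt hα1
  have h1 : 0 < (2:ℝ) ^ (1-α) - 1 := by linarith
  unfold c1
  field_simp
  nlinarith [sq_nonneg ((2:ℝ) ^ (1-α) - 1)]

lemma rpow_neg_lt_one (hα0 : 0 < α) : (2:ℝ) ^ (-α) < 1 := by
  rw [Real.rpow_neg (by norm_num)]
  rw [inv_lt_one_iff₀]
  right
  rw [Real.one_lt_rpow_iff_of_pos two_pos]
  left; constructor <;> [norm_num; exact hα0]

lemma c2_pos (hα0 : 0 < α) (hα1 : α < 1) : 0 < c2 α := by
  have h1 := c1_ge_one hα1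
  have h2 := rpow_neg_lt_one hα0
  have h3 := rpow2_pos (-α)
  have h4 : 0 < 1 - (2:ℝ) ^ (-α) := by linarith
  unfold c2
  positivity

lemma haar_mid {d : ℕ} {K : ℝ} {f : ℝ → EuclideanSpace ℝ (Fin d)}
    (hK : HaarCoeffBound α f K) (p : ℕ) (j : ℤ) (h0 : 0 ≤ j) (h1 : j < 2 ^ p) :
    ‖(2:ℝ) • f ((2 * (j:ℝ) + 1) / 2 ^ (p+1)) - f ((j:ℝ) / 2 ^ p) - f (((j:ℝ) + 1) / 2 ^ p)‖
      ≤ K * (2:ℝ) ^ (-(p:ℝ) * α) := by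
  obtain ⟨jn, rfl⟩ : ∃ jn : ℕ, j = jn := ⟨j.toNat, (Int.toNat_of_nonneg h0).symm⟩
  have hjn : jn < 2 ^ p := by exact_mod_cast h1
  have hb := hK.2 p (jn + 1) (by omega) (by omega)
  set V : EuclideanSpace ℝ (Fin d) :=
    (2:ℝ) • f ((2 * ((jn:ℤ):ℝ) + 1) / 2 ^ (p+1)) - f (((jn:ℤ):ℝ) / 2 ^ p)
      - f ((((jn:ℤ):ℝ) + 1) / 2 ^ p) with hV
  have e1 : (2 * ((jn+1 : ℕ):ℝ) - 1) / 2 ^ (p+1) = (2 * ((jn:ℤ):ℝ) + 1) / 2 ^ (p+1) := by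
    push_cast; ring_nf
  have e2 : (((jn+1 : ℕ):ℝ) - 1) / 2 ^ p = ((jn:ℤ):ℝ) / 2 ^ p := by push_cast; ring_nf
  have e3 : ((jn+1 : ℕ):ℝ) / 2 ^ p = (((jn:ℤ):ℝ) + 1) / 2 ^ p := by push_cast; ring_nf
  have hco : haarCoeff f p (jn + 1) = (2:ℝ) ^ ((p:ℝ) / 2) • V := by
    unfold haarCoeff
    rw [e1, e2, e3, hV, ← Nat.cast_smul_eq_nsmul ℝ]
    norm_num
  rw [hco, norm_smul, Real.norm_eq_abs, abs_of_pos (rpow2_pos _), ← mul_assoc,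
    ← Real.rpow_add two_pos] at hb
  have he : (p:ℝ) * (α - 1/2) + (p:ℝ)/2 = (p:ℝ) * α := by ring
  rw [he] at hb
  calc ‖V‖ = (2:ℝ) ^ (-(p:ℝ) * α) * ((2:ℝ) ^ ((p:ℝ)*α) * ‖V‖) := by
        rw [← mul_assoc, ← Real.rpow_add two_pos]; norm_num
    _ ≤ (2:ℝ) ^ (-(p:ℝ) * α) * K := by
        exact mul_le_mul_of_nonneg_left hb (le_of_lt (rpow2_pos _))
    _ = K * (2:ℝ) ^ (-(p:ℝ) * α) := mul_comm _ _


variable {α : ℝ} {d : ℕ} {K : ℝ} {f : ℝ → EuclideanSpace ℝ (Fin d)}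


variable {α : ℝ} {d : ℕ} {K : ℝ} {f : ℝ → EuclideanSpace ℝ (Fin d)}

lemma adj (hα1 : α < 1) (hK : HaarCoeffBound α f K) (hK0 : 0 ≤ K) :
    ∀ n : ℕ, ∀ k : ℤ, 0 ≤ k → k + 1 ≤ 2 ^ n →
      ‖f (((k:ℝ) + 1) / 2 ^ n) - f ((k:ℝ) / 2 ^ n)‖ ≤ c1 α * K * (2:ℝ) ^ (-(n:ℝ) * α) := by
  intro n
  induction n with
  | zero =>
    intro k h0 h1
    have hk : k = 0 := by omega
    subst hk
    norm_num
    calc ‖f 1 - f 0‖ ≤ K := hK.1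
      _ ≤ c1 α * K := le_mul_of_one_le_left hK0 (c1_ge_one hα1)
  | succ n ih =>
    intro k h0 h1
    -- key bound at level n for the parent interval
    have key : ∀ j : ℤ, 0 ≤ j → j < 2 ^ n →
        (‖f ((2*(j:ℝ)+1) / 2 ^ (n+1)) - f ((j:ℝ) / 2 ^ n)‖
            ≤ c1 α * K * (2:ℝ) ^ (-((n:ℝ)+1) * α)) ∧
        (‖f (((j:ℝ)+1) / 2 ^ n) - f ((2*(j:ℝ)+1) / 2 ^ (n+1))‖
            ≤ c1 α * K * (2:ℝ) ^ (-((n:ℝ)+1) * α)) := by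
      intro j hj0 hj1
      have hmid := haar_mid hK n j hj0 hj1
      have hadj := ih j hj0 (by omega)
      set a := f ((j:ℝ) / 2 ^ n)
      set b := f (((j:ℝ)+1) / 2 ^ n)
      set m := f ((2*(j:ℝ)+1) / 2 ^ (n+1))
      have hb2 : ‖b - a‖ ≤ c1 α * K * (2:ℝ) ^ (-(n:ℝ) * α) := hadj
      have hV : ‖(2:ℝ) • m - a - b‖ ≤ K * (2:ℝ) ^ (-(n:ℝ) * α) := hmid
      have e1 : (2:ℝ) • (m - a) = ((2:ℝ) • m - a - b) + (b - a) := by module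
      have e2 : (2:ℝ) • (b - m) = (b - a) - ((2:ℝ) • m - a - b) := by module
      have hn1 : ‖(2:ℝ) • (m - a)‖ = 2 * ‖m - a‖ := by
        rw [norm_smul]; norm_num
      have hn2 : ‖(2:ℝ) • (b - m)‖ = 2 * ‖b - m‖ := by
        rw [norm_smul]; norm_num
      have hsum : (1 + c1 α) * K * (2:ℝ) ^ (-(n:ℝ) * α)
          ≤ 2 * (c1 α * K * (2:ℝ) ^ (-((n:ℝ)+1) * α)) := by
        have hkey := c1_key hα1
        have hp : (0:ℝ) ≤ K * (2:ℝ) ^ (-(n:ℝ) * α) :=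
          mul_nonneg hK0 (le_of_lt (rpow2_pos _))
        have he : (2:ℝ) ^ (-((n:ℝ)+1) * α) = (2:ℝ) ^ (-(n:ℝ) * α) * (2:ℝ) ^ (-α) := by
          rw [← Real.rpow_add two_pos]; ring_nf
        have he2 : (2:ℝ) ^ (1-α) = 2 * (2:ℝ) ^ (-α) := by
          rw [show (1-α) = 1 + (-α) by ring, Real.rpow_add two_pos, Real.rpow_one]
        calc (1 + c1 α) * K * (2:ℝ) ^ (-(n:ℝ) * α)
            ≤ (c1 α * (2:ℝ) ^ (1-α)) * (K * (2:ℝ) ^ (-(n:ℝ) * α)) := by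
              rw [mul_assoc]; exact mul_le_mul_of_nonneg_right hkey hp
          _ = 2 * (c1 α * K * (2:ℝ) ^ (-((n:ℝ)+1) * α)) := by rw [he, he2]; ring
      constructor
      · have : 2 * ‖m - a‖ ≤ (1 + c1 α) * K * (2:ℝ) ^ (-(n:ℝ) * α) := by
          rw [← hn1, e1]
          calc ‖((2:ℝ) • m - a - b) + (b - a)‖ ≤ ‖(2:ℝ) • m - a - b‖ + ‖b - a‖ :=
                norm_add_le _ _
            _ ≤ (1 + c1 α) * K * (2:ℝ) ^ (-(n:ℝ) * α) := by linarith
        linarith [hsum]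
      · have : 2 * ‖b - m‖ ≤ (1 + c1 α) * K * (2:ℝ) ^ (-(n:ℝ) * α) := by
          rw [← hn2, e2]
          calc ‖(b - a) - ((2:ℝ) • m - a - b)‖ ≤ ‖b - a‖ + ‖(2:ℝ) • m - a - b‖ :=
                norm_sub_le _ _
            _ ≤ (1 + c1 α) * K * (2:ℝ) ^ (-(n:ℝ) * α) := by linarith
        linarith [hsum]
    rcases Int.even_or_odd k with ⟨j, hj⟩ | ⟨j, hj⟩
    · -- k = 2j : pair (midpoint, left endpoint)
      subst hj
      have hj0 : 0 ≤ j := by omega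
      have hj1 : j < 2 ^ n := by omega
      have := (key j hj0 hj1).1
      have ea : ((j:ℝ) + j + 1) / 2 ^ (n+1) = (2*(j:ℝ)+1) / 2 ^ (n+1) := by ring_nf
      have eb : ((j:ℝ) + j) / 2 ^ (n+1) = (j:ℝ) / 2 ^ n := by
        rw [pow_succ]; ring
      push_cast
      rw [ea, eb]
      exact this
    · subst hj
      have hj0 : 0 ≤ j := by omega
      have hj1 : j < 2 ^ n := by omega
      have := (key j hj0 hj1).2
      have ea : ((2*j:ℝ) + 1 + 1) / 2 ^ (n+1) = ((j:ℝ)+1) / 2 ^ n := by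
        rw [pow_succ]; ring
      have eb : (2*(j:ℝ) + 1) / 2 ^ (n+1) = (2*(j:ℝ)+1) / 2 ^ (n+1) := rfl
      push_cast
      rw [ea]
      exact this


/-- level-`n` dyadic approximation of `t`. -/
def dy (n : ℕ) (t : ℝ) : ℝ := (⌊2 ^ n * t⌋ : ℝ) / 2 ^ n

lemma dy_le {t : ℝ} (n : ℕ) : dy n t ≤ t := by
  unfold dy
  rw [div_le_iff₀ (by positivity)]
  calc ((⌊2 ^ n * t⌋ : ℝ)) ≤ 2 ^ n * t := Int.floor_le _
    _ = t * 2 ^ n := mul_comm _ _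

lemma dy_gt {t : ℝ} (n : ℕ) : t - (2 ^ n)⁻¹ < dy n t := by
  unfold dy
  have h2 : (0:ℝ) < 2 ^ n := by positivity
  have hf := Int.lt_floor_add_one ((2:ℝ) ^ n * t)
  have h3 : t < ((⌊2 ^ n * t⌋ : ℝ) + 1) / 2 ^ n := by
    rw [lt_div_iff₀ h2]; nlinarith
  have he : ((⌊2 ^ n * t⌋ : ℝ) + 1) / 2 ^ n = (⌊2 ^ n * t⌋ : ℝ) / 2 ^ n + (2 ^ n)⁻¹ := by
    ring
  linarith [he ▸ h3]

lemma dy_floor_nonneg {t : ℝ} (ht : t ∈ Icc (0:ℝ) 1) (n : ℕ) : 0 ≤ ⌊(2:ℝ) ^ n * t⌋ :=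
  Int.floor_nonneg.mpr (mul_nonneg (by positivity) ht.1)

lemma dy_mem {t : ℝ} (ht : t ∈ Icc (0:ℝ) 1) (n : ℕ) : dy n t ∈ Icc (0:ℝ) 1 := by
  constructor
  · exact div_nonneg (by exact_mod_cast dy_floor_nonneg ht n) (by positivity)
  · exact le_trans (dy_le n) ht.2

lemma dy_floor_le {t : ℝ} (ht : t ∈ Icc (0:ℝ) 1) (n : ℕ) : ⌊(2:ℝ) ^ n * t⌋ ≤ 2 ^ n := by
  have h : (2:ℝ) ^ n * t ≤ ((2 ^ n : ℤ) : ℝ) := by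
    push_cast
    nlinarith [ht.2, (by positivity : (0:ℝ) < 2 ^ n)]
  calc ⌊(2:ℝ) ^ n * t⌋ ≤ ⌊((2 ^ n : ℤ) : ℝ)⌋ := Int.floor_le_floor h
    _ = 2 ^ n := Int.floor_intCast _

/-- `dy (n+1) t` and `dy n t` are equal or adjacent at level `n+1`. -/
lemma dy_step (hα1 : α < 1) (hK : HaarCoeffBound α f K) (hK0 : 0 ≤ K)
    {t : ℝ} (ht : t ∈ Icc (0:ℝ) 1) (n : ℕ) :
    ‖f (dy (n+1) t) - f (dy n t)‖ ≤ c1 α * K * (2:ℝ) ^ (-((n:ℝ)+1) * α) := by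
  set j := ⌊(2:ℝ) ^ n * t⌋ with hj
  have hj0 : 0 ≤ j := dy_floor_nonneg ht n
  have hcases : ⌊(2:ℝ) ^ (n+1) * t⌋ = 2 * j ∨ ⌊(2:ℝ) ^ (n+1) * t⌋ = 2 * j + 1 := by
    have hlow : 2 * j ≤ ⌊(2:ℝ) ^ (n+1) * t⌋ := by
      rw [Int.le_floor]
      push_cast
      have := Int.floor_le ((2:ℝ) ^ n * t)
      rw [pow_succ]
      nlinarith
    have hhigh : ⌊(2:ℝ) ^ (n+1) * t⌋ < 2 * j + 2 := by
      rw [Int.floor_lt]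
      push_cast
      have := Int.lt_floor_add_one ((2:ℝ) ^ n * t)
      rw [pow_succ]
      nlinarith
    omega
  rcases hcases with hc | hc
  · have heq : dy (n+1) t = dy n t := by
      unfold dy
      rw [hc, pow_succ]
      push_cast
      ring
    rw [heq, sub_self, norm_zero]
    have h1 := c1_ge_one hα1
    exact mul_nonneg (mul_nonneg (by linarith) hK0) (le_of_lt (rpow2_pos _))
  · have h1 : dy (n+1) t = (((2*j:ℤ):ℝ) + 1) / 2 ^ (n+1) := by
      unfold dy; rw [hc]; push_cast; ring
    have h2 : dy n t = ((2*j:ℤ) : ℝ) / 2 ^ (n+1) := by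
      unfold dy; rw [pow_succ]; push_cast; ring
    have hbnd : (2*j) + 1 ≤ 2 ^ (n+1) := by
      have := dy_floor_le ht (n+1)
      omega
    have hadj := adj hα1 hK hK0 (n+1) (2*j) (by omega) hbnd
    rw [h1, h2]
    push_cast at hadj ⊢
    exact hadj

variable {α : ℝ} {d : ℕ} {K : ℝ} {f : ℝ → EuclideanSpace ℝ (Fin d)}

lemma c2_ratio (hα0 : 0 < α) : c2 α * (1 - (2:ℝ) ^ (-α)) = c1 α * (2:ℝ) ^ (-α) := by
  have h := rpow_neg_lt_one hα0
  have h1 : 1 - (2:ℝ) ^ (-α) ≠ 0 := by linarith [h]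
  unfold c2
  field_simp

lemma tele (hα0 : 0 < α) (hα1 : α < 1) (hK : HaarCoeffBound α f K) (hK0 : 0 ≤ K)
    {t : ℝ} (ht : t ∈ Icc (0:ℝ) 1) (n : ℕ) : ∀ N : ℕ,
    ‖f (dy (n+N) t) - f (dy n t)‖
      ≤ c2 α * K * ((2:ℝ) ^ (-(n:ℝ) * α) - (2:ℝ) ^ (-((n:ℝ) + (N:ℝ)) * α)) := by
  intro N
  induction N with
  | zero => norm_num
  | succ N ih =>
    have hstep := dy_step hα1 hK hK0 ht (n+N)
    have htri : ‖f (dy (n+(N+1)) t) - f (dy n t)‖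
        ≤ ‖f (dy (n+N+1) t) - f (dy (n+N) t)‖ + ‖f (dy (n+N) t) - f (dy n t)‖ := by
      have e : n + (N+1) = n + N + 1 := by ring
      rw [e]
      exact norm_sub_le_norm_sub_add_norm_sub _ _ _
    set r := (2:ℝ) ^ (-α) with hr
    set A := (2:ℝ) ^ (-((n:ℝ) + (N:ℝ)) * α) with hA
    have hsplit : (2:ℝ) ^ (-((n:ℝ) + ((N:ℕ)+1:ℝ)) * α) = A * r := by
      rw [hA, hr, ← Real.rpow_add two_pos]; ring_nf
    have hstep' : ‖f (dy (n+N+1) t) - f (dy (n+N) t)‖ ≤ c1 α * K * (A * r) := by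
      have e2 : -(((n+N:ℕ):ℝ) + 1) * α = (-((n:ℝ)+(N:ℝ)) * α) + (-α) := by
        push_cast; ring
      rw [e2, Real.rpow_add two_pos] at hstep
      exact hstep
    have hratio := c2_ratio hα0
    rw [← hr] at hratio
    have key : c1 α * K * (A * r) = c2 α * K * (A - A * r) := by
      linear_combination (-(K*A)) * hratio
    push_cast at ih ⊢
    calc ‖f (dy (n+(N+1)) t) - f (dy n t)‖
        ≤ c1 α * K * (A * r) + c2 α * K * ((2:ℝ) ^ (-(n:ℝ) * α) - A) := by
          push_cast at htri; linarith
      _ = c2 α * K * ((2:ℝ) ^ (-(n:ℝ) * α) - (2:ℝ) ^ (-((n:ℝ) + ((N:ℝ)+1)) * α)) := by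
          rw [show (2:ℝ) ^ (-((n:ℝ) + ((N:ℝ)+1)) * α) = A * r by
            rw [hA, hr, ← Real.rpow_add two_pos]; ring_nf]
          linarith [key]

lemma approx (hα0 : 0 < α) (hα1 : α < 1) (hf : ContinuousOn f (Icc 0 1))
    (hK : HaarCoeffBound α f K) (hK0 : 0 ≤ K)
    {t : ℝ} (ht : t ∈ Icc (0:ℝ) 1) (n : ℕ) :
    ‖f t - f (dy n t)‖ ≤ c2 α * K * (2:ℝ) ^ (-(n:ℝ) * α) := by
  have hgeom : Tendsto (fun N : ℕ => ((1:ℝ)/2) ^ N) atTop (𝓝 0) :=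
    tendsto_pow_atTop_nhds_zero_of_lt_one (by norm_num) (by norm_num)
  have hbound : ∀ N : ℕ, dist (dy (n+N) t) t ≤ ((1:ℝ)/2) ^ N := by
    intro N
    have hle : dy (n+N) t ≤ t := dy_le (n+N)
    have h1 : t - (2 ^ (n+N))⁻¹ < dy (n+N) t := dy_gt (n+N)
    have h2 : ((2:ℝ) ^ (n+N))⁻¹ ≤ (1/2) ^ N := by
      rw [pow_add, mul_inv, one_div, inv_pow]
      have hp : (0:ℝ) < ((2:ℝ) ^ N)⁻¹ := by positivity
      have h3 : ((2:ℝ) ^ n)⁻¹ ≤ 1 := by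
        rw [inv_le_one_iff₀]; right; exact one_le_pow₀ (by norm_num)
      nlinarith
    rw [Real.dist_eq, abs_sub_comm, abs_of_nonneg (by linarith)]
    linarith
  have hdyt : Tendsto (fun N : ℕ => dy (n+N) t) atTop (𝓝 t) := by
    rw [tendsto_iff_dist_tendsto_zero]
    exact squeeze_zero (fun N => dist_nonneg) hbound hgeom
  have hmem : ∀ N : ℕ, dy (n+N) t ∈ Icc (0:ℝ) 1 := fun N => dy_mem ht (n+N)
  have hft : Tendsto (fun N : ℕ => f (dy (n+N) t)) atTop (𝓝 (f t)) := by
    apply (hf t ht).tendsto.comp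
    rw [tendsto_nhdsWithin_iff]
    exact ⟨hdyt, Eventually.of_forall hmem⟩
  have hnorm : Tendsto (fun N : ℕ => ‖f (dy (n+N) t) - f (dy n t)‖) atTop
      (𝓝 ‖f t - f (dy n t)‖) := ((hft.sub tendsto_const_nhds).norm)
  apply le_of_tendsto hnorm
  filter_upwards with N
  calc ‖f (dy (n+N) t) - f (dy n t)‖
      ≤ c2 α * K * ((2:ℝ) ^ (-(n:ℝ) * α) - (2:ℝ) ^ (-((n:ℝ) + (N:ℝ)) * α)) :=
        tele hα0 hα1 hK hK0 ht n N
    _ ≤ c2 α * K * (2:ℝ) ^ (-(n:ℝ) * α) := by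
        have h1 : 0 ≤ c2 α * K := mul_nonneg (le_of_lt (c2_pos hα0 hα1)) hK0
        nlinarith [rpow2_pos (-((n:ℝ) + (N:ℝ)) * α), h1]

variable {α : ℝ} {d : ℕ} {K : ℝ} {f : ℝ → EuclideanSpace ℝ (Fin d)}

lemma forward (hα0 : 0 < α) (hK0 : 0 ≤ K) (hb : HolderBound α f K) :
    HaarCoeffBound α f (2 * K) := by
  constructor
  · have h := hb 0 (by norm_num) 1 (by norm_num)
    simp only [sub_zero, abs_one, Real.one_rpow, mul_one] at h
    linarith
  · intro p m h1 h2
    have hp1 : (0:ℝ) < 2 ^ (p+1) := by positivity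
    have hp0 : (0:ℝ) < 2 ^ p := by positivity
    have hm1 : (1:ℝ) ≤ (m:ℝ) := by exact_mod_cast h1
    have hm2 : (m:ℝ) ≤ 2 ^ p := by exact_mod_cast h2
    set t0 : ℝ := ((m:ℝ) - 1) / 2 ^ p with ht0
    set t1 : ℝ := (2 * (m:ℝ) - 1) / 2 ^ (p+1) with ht1
    set t2 : ℝ := (m:ℝ) / 2 ^ p with ht2
    have hmem0 : t0 ∈ Icc (0:ℝ) 1 := by
      refine ⟨div_nonneg (by linarith) hp0.le, ?_⟩
      rw [ht0, div_le_one hp0]; linarith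
    have hmem1 : t1 ∈ Icc (0:ℝ) 1 := by
      refine ⟨div_nonneg (by linarith) hp1.le, ?_⟩
      rw [ht1, div_le_one hp1, pow_succ]; nlinarith
    have hmem2 : t2 ∈ Icc (0:ℝ) 1 := by
      refine ⟨div_nonneg (by linarith) hp0.le, ?_⟩
      rw [ht2, div_le_one hp0]; linarith
    have hd1 : t1 - t0 = ((2:ℝ) ^ (p+1))⁻¹ := by
      rw [ht1, ht0, pow_succ]; field_simp; ring
    have hd2 : t2 - t1 = ((2:ℝ) ^ (p+1))⁻¹ := by
      rw [ht2, ht1, pow_succ]; field_simp; ring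
    set E : ℝ := (2:ℝ) ^ (-(((p:ℝ))+1) * α) with hE
    have hEeq : (((2:ℝ) ^ (p+1))⁻¹) ^ α = E := by
      rw [hE, ← Real.rpow_natCast 2 (p+1), ← Real.rpow_neg (by norm_num),
        ← Real.rpow_mul (by norm_num)]
      push_cast
      ring_nf
    have hb1 : ‖f t1 - f t0‖ ≤ K * E := by
      have := hb t0 hmem0 t1 hmem1
      rwa [hd1, abs_of_pos (by positivity), hEeq] at this
    have hb2 : ‖f t2 - f t1‖ ≤ K * E := by
      have := hb t1 hmem1 t2 hmem2
      rwa [hd2, abs_of_pos (by positivity), hEeq] at this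
    have hV : ‖2 • f t1 - f t0 - f t2‖ ≤ 2 * K * E := by
      have e : 2 • f t1 - f t0 - f t2 = (f t1 - f t0) - (f t2 - f t1) := by
        rw [two_smul]; abel
      rw [e]
      calc ‖(f t1 - f t0) - (f t2 - f t1)‖ ≤ ‖f t1 - f t0‖ + ‖f t2 - f t1‖ :=
            norm_sub_le _ _
        _ ≤ 2 * K * E := by linarith
    have hnorm : ‖haarCoeff f p m‖ = (2:ℝ) ^ ((p:ℝ)/2) * ‖2 • f t1 - f t0 - f t2‖ := by
      unfold haarCoeff
      rw [← ht0, ← ht1, ← ht2, norm_smul, Real.norm_eq_abs, abs_of_pos (rpow2_pos _)]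
    rw [hnorm, ← mul_assoc, ← Real.rpow_add two_pos]
    have he : (p:ℝ) * (α - 1/2) + (p:ℝ)/2 = (p:ℝ) * α := by ring
    rw [he]
    calc (2:ℝ) ^ ((p:ℝ) * α) * ‖2 • f t1 - f t0 - f t2‖
        ≤ (2:ℝ) ^ ((p:ℝ) * α) * (2 * K * E) :=
          mul_le_mul_of_nonneg_left hV (rpow2_pos _).le
      _ = 2 * K * (2:ℝ) ^ (-α) := by
          rw [hE, ← mul_assoc, mul_comm ((2:ℝ) ^ ((p:ℝ)*α)), mul_assoc,
            ← Real.rpow_add two_pos]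
          ring_nf
      _ ≤ 2 * K * 1 := by
          have := rpow_neg_lt_one hα0
          have h2 : (0:ℝ) ≤ 2 * K := by linarith
          nlinarith
      _ = 2 * K := mul_one _

variable {α : ℝ} {d : ℕ} {K : ℝ} {f : ℝ → EuclideanSpace ℝ (Fin d)}

lemma backward (hα0 : 0 < α) (hα1 : α < 1) (hf : ContinuousOn f (Icc 0 1))
    (hK : HaarCoeffBound α f K) (hK0 : 0 ≤ K) :
    HolderBound α f ((2 * c2 α + c1 α) * (2:ℝ) ^ α * K) := by
  have hc1 := c1_ge_one hα1
  have hc2 := c2_pos hα0 hα1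
  have key : ∀ s ∈ Icc (0:ℝ) 1, ∀ t ∈ Icc (0:ℝ) 1, s < t →
      ‖f t - f s‖ ≤ (2 * c2 α + c1 α) * (2:ℝ) ^ α * K * |t - s| ^ α := by
    intro s hs t ht hst
    have hts0 : 0 < t - s := by linarith
    have hts1 : t - s ≤ 1 := by
      have := hs.1; have := ht.2; linarith
    -- choose the dyadic level n
    have hex : ∃ N : ℕ, ((1:ℝ)/2) ^ N < t - s :=
      exists_pow_lt_of_lt_one hts0 (by norm_num)
    have hspec0 : ((1:ℝ)/2) ^ (Nat.find hex) < t - s := Nat.find_spec hex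
    have hn₀pos : Nat.find hex ≠ 0 := by
      intro h
      rw [h] at hspec0
      norm_num at hspec0
      linarith
    obtain ⟨n, hn⟩ : ∃ n, Nat.find hex = n + 1 := ⟨Nat.find hex - 1, by omega⟩
    have hspec : ((1:ℝ)/2) ^ (n+1) < t - s := by rw [← hn]; exact hspec0
    have hmin : t - s ≤ ((1:ℝ)/2) ^ n := by
      have := Nat.find_min hex (by omega : n < Nat.find hex)
      push_neg at this
      exact this
    -- adjacency of dy n s and dy n t
    set ks := ⌊(2:ℝ) ^ n * s⌋ with hks
    set kt := ⌊(2:ℝ) ^ n * t⌋ with hkt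
    have hkskt : ks ≤ kt := Int.floor_le_floor (by nlinarith [pow_pos (by norm_num : (0:ℝ) < 2) n])
    have hktks : kt ≤ ks + 1 := by
      have h2n : (0:ℝ) < 2 ^ n := by positivity
      have hle : (2:ℝ) ^ n * t ≤ 2 ^ n * s + 1 := by
        have : (2:ℝ) ^ n * (t - s) ≤ 2 ^ n * ((1:ℝ)/2) ^ n := by nlinarith
        have h1 : (2:ℝ) ^ n * ((1:ℝ)/2) ^ n = 1 := by
          rw [← mul_pow]; norm_num
        nlinarith
      calc kt ≤ ⌊(2:ℝ) ^ n * s + 1⌋ := Int.floor_le_floor hle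
        _ = ks + 1 := by rw [Int.floor_add_one]
    have hmid : ‖f (dy n t) - f (dy n s)‖ ≤ c1 α * K * (2:ℝ) ^ (-(n:ℝ) * α) := by
      rcases eq_or_lt_of_le hkskt with heq | hlt
      · have : dy n t = dy n s := by unfold dy; rw [← hks, ← hkt, heq]
        rw [this, sub_self, norm_zero]
        exact mul_nonneg (mul_nonneg (by linarith) hK0) (rpow2_pos _).le
      · have heq : kt = ks + 1 := by omega
        have hks0 : 0 ≤ ks := dy_floor_nonneg hs n
        have hbnd : ks + 1 ≤ 2 ^ n := by
          have := dy_floor_le ht n; omega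
        have := adj hα1 hK hK0 n ks hks0 hbnd
        have e1 : dy n t = ((ks:ℝ) + 1) / 2 ^ n := by
          unfold dy; rw [← hkt, heq]; push_cast; ring
        have e2 : dy n s = (ks:ℝ) / 2 ^ n := by unfold dy; rw [← hks]
        rw [e1, e2]
        exact this
    have happt := approx hα0 hα1 hf hK hK0 ht n
    have happs := approx hα0 hα1 hf hK hK0 hs n
    have htri : ‖f t - f s‖ ≤ (2 * c2 α + c1 α) * K * (2:ℝ) ^ (-(n:ℝ) * α) := by
      calc ‖f t - f s‖
          ≤ ‖f t - f (dy n t)‖ + ‖f (dy n t) - f s‖ := norm_sub_le_norm_sub_add_norm_sub _ _ _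
        _ ≤ ‖f t - f (dy n t)‖ + (‖f (dy n t) - f (dy n s)‖ + ‖f (dy n s) - f s‖) := by
            linarith [norm_sub_le_norm_sub_add_norm_sub (f (dy n t)) (f (dy n s)) (f s)]
        _ ≤ (2 * c2 α + c1 α) * K * (2:ℝ) ^ (-(n:ℝ) * α) := by
            rw [norm_sub_rev (f (dy n s)) (f s)]
            linarith
    -- convert 2^{-nα} into |t-s|^α
    have hpow : (2:ℝ) ^ (-(n:ℝ) * α) ≤ (2:ℝ) ^ α * (t - s) ^ α := by
      have h1 : (2:ℝ) ^ (-(n:ℝ) * α) = (((1:ℝ)/2) ^ n) ^ α := by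
        rw [Real.rpow_mul (by norm_num : (0:ℝ) ≤ 2), Real.rpow_neg (by norm_num),
          Real.rpow_natCast]
        rw [one_div, inv_pow]
      have h2 : ((1:ℝ)/2) ^ n ≤ 2 * (t - s) := by
        have : ((1:ℝ)/2) ^ (n+1) < t - s := hspec
        rw [pow_succ] at this
        linarith
      have h3 : (((1:ℝ)/2) ^ n) ^ α ≤ (2 * (t - s)) ^ α :=
        Real.rpow_le_rpow (by positivity) h2 hα0.le
      have h4 : ((2:ℝ) * (t - s)) ^ α = (2:ℝ) ^ α * (t - s) ^ α :=
        Real.mul_rpow (by norm_num) hts0.le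
      rw [h1]
      rw [h4] at h3
      exact h3
    have habs : |t - s| = t - s := abs_of_pos hts0
    rw [habs]
    calc ‖f t - f s‖ ≤ (2 * c2 α + c1 α) * K * (2:ℝ) ^ (-(n:ℝ) * α) := htri
      _ ≤ (2 * c2 α + c1 α) * K * ((2:ℝ) ^ α * (t - s) ^ α) := by
          apply mul_le_mul_of_nonneg_left hpow
          exact mul_nonneg (by linarith) hK0
      _ = (2 * c2 α + c1 α) * (2:ℝ) ^ α * K * (t - s) ^ α := by ring
  -- symmetrize
  intro s hs t ht
  rcases lt_trichotomy s t with h | h | h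
  · exact key s hs t ht h
  · subst h
    rw [sub_self, norm_zero, sub_self, abs_zero, Real.zero_rpow hα0.ne', mul_zero]
  · have := key t ht s hs h
    rwa [norm_sub_rev, abs_sub_comm] at this

end CAux

/-- Ciesielski's isomorphism: for `α ∈ (0,1)`, a continuous `f : [0,1] → ℝ^d` is `α`-Hölder
iff `sup_{p,m} 2^{p(α-1/2)}|⟨H_{pm},df⟩| < ∞`, and the two quantities are comparable up to a
constant depending only on `α`. -/
theorem ciesielski_isomorphism (α : ℝ) (hα0 : 0 < α) (hα1 : α < 1) :
    ∃ C > (0:ℝ), ∀ (d : ℕ) (f : ℝ → EuclideanSpace ℝ (Fin d)),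
      ContinuousOn f (Icc 0 1) →
      ((∃ K, HolderBound α f K) ↔ (∃ K, HaarCoeffBound α f K)) ∧
      (∀ K, 0 ≤ K → HolderBound α f K → HaarCoeffBound α f (C * K)) ∧
      (∀ K, 0 ≤ K → HaarCoeffBound α f K → HolderBound α f (C * K)) := by
  classical
  set C : ℝ := 2 + (2 * CAux.c2 α + CAux.c1 α) * (2:ℝ) ^ α with hC
  have hc1 := CAux.c1_ge_one hα1
  have hc2 := CAux.c2_pos hα0 hα1
  have hterm : 0 < (2 * CAux.c2 α + CAux.c1 α) * (2:ℝ) ^ α :=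
    mul_pos (by linarith) (CAux.rpow2_pos α)
  have hCpos : 0 < C := by rw [hC]; linarith
  have hC2 : 2 ≤ C := by rw [hC]; linarith
  refine ⟨C, hCpos, fun d f hf => ?_⟩
  have quant1 : ∀ K, 0 ≤ K → HolderBound α f K → HaarCoeffBound α f (C * K) := by
    intro K hK0 hb
    obtain ⟨h1, h2⟩ := CAux.forward hα0 hK0 hb
    have hle : 2 * K ≤ C * K := mul_le_mul_of_nonneg_right hC2 hK0
    exact ⟨le_trans h1 hle, fun p m hm1 hm2 => le_trans (h2 p m hm1 hm2) hle⟩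
  have quant2 : ∀ K, 0 ≤ K → HaarCoeffBound α f K → HolderBound α f (C * K) := by
    intro K hK0 hb
    have hhold := CAux.backward hα0 hα1 hf hb hK0
    intro s hs t ht
    have hle : (2 * CAux.c2 α + CAux.c1 α) * (2:ℝ) ^ α * K ≤ C * K :=
      mul_le_mul_of_nonneg_right (by rw [hC]; linarith) hK0
    calc ‖f t - f s‖ ≤ (2 * CAux.c2 α + CAux.c1 α) * (2:ℝ) ^ α * K * |t - s| ^ α :=
          hhold s hs t ht
      _ ≤ C * K * |t - s| ^ α := by
          apply mul_le_mul_of_nonneg_right hle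
          positivity
  refine ⟨⟨?_, ?_⟩, quant1, quant2⟩
  · rintro ⟨K, hb⟩
    have hK0 : 0 ≤ K := by
      have h := hb 0 (by norm_num) 1 (by norm_num)
      simp only [sub_zero, abs_one, Real.one_rpow, mul_one] at h
      exact le_trans (norm_nonneg _) h
    exact ⟨C * K, quant1 K hK0 hb⟩
  · rintro ⟨K, hb⟩
    have hK0 : 0 ≤ K := le_trans (norm_nonneg _) hb.1
    exact ⟨C * K, quant2 K hK0 hb⟩
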